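/- arXiv:2405.01424 — 3 statements merged into one kernel-verified Lean document; each statement's English description precedes it below -/
import Mathlib

section
/- Let C ∈ 𝔾 and write E_j^{(C)} = [α_j, β_j]. Then α_j < β_j for all j, and β_{j−1} ≤ α_j for all j = 2, …, n; moreover, for j = 2, …, n, β_{j−1} = α_j if and only if f_j^{(C)}(γ_{(j−1)j}(C)) ≥ 0. -/
open MeasureTheory Set
open scoped Classical

/-- `f_j^{(C)}(t) = C_j - (t - x_j)^2`. -/
noncomputable def fj (n : ℕ) (x C : Fin n → ℝ) (j : Fin n) (t : ℝ) : ℝ :=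
  C j - (t - x j) ^ 2

/-- `f^{(C)}(t) = max{f_1^{(C)}(t), …, f_n^{(C)}(t), 0}`. -/
noncomputable def fmax (n : ℕ) (x C : Fin n → ℝ) (t : ℝ) : ℝ :=
  max (⨆ j : Fin n, fj n x C j t) 0

/-- `E_j^{(C)} = {t : f_j^{(C)}(t) = f^{(C)}(t)}`. -/
def Ej (n : ℕ) (x C : Fin n → ℝ) (j : Fin n) : Set ℝ :=
  {t | fj n x C j t = fmax n x C t}

/-- `F_j(C) = ∫_{E_j^{(C)}} f^{(C)}` if `E_j^{(C)} ≠ ∅`, else `0`. -/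
noncomputable def Fj (n : ℕ) (x C : Fin n → ℝ) (j : Fin n) : ℝ :=
  if (Ej n x C j).Nonempty then ∫ t in Ej n x C j, fmax n x C t else 0

/-- `F(C) = (F_1(C), …, F_n(C))`. -/
noncomputable def Fvec (n : ℕ) (x C : Fin n → ℝ) : Fin n → ℝ :=
  fun j => Fj n x C j

/-- `𝔾 = {C : F_j(C) > 0 for all j}`. -/
def Gset (n : ℕ) (x : Fin n → ℝ) : Set (Fin n → ℝ) :=
  {C | ∀ j, 0 < Fj n x C j}

/-- `γ_{ij}(C) = (C_i - C_j)/(2(x_j - x_i)) + (x_i + x_j)/2`. -/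
noncomputable def gam (n : ℕ) (x C : Fin n → ℝ) (i j : Fin n) : ℝ :=
  (C i - C j) / (2 * (x j - x i)) + (x i + x j) / 2

lemma fj_sub (n : ℕ) (x C : Fin n → ℝ) (k i : Fin n) (s t : ℝ) :
    fj n x C k t - fj n x C i t
      = (fj n x C k s - fj n x C i s) + 2 * (x k - x i) * (t - s) := by
  simp only [fj]; ring

lemma fj_gam (n : ℕ) (x C : Fin n → ℝ) (i j : Fin n) (h : x i ≠ x j) :
    fj n x C i (gam n x C i j) = fj n x C j (gam n x C i j) := by
  have h2 : x j - x i ≠ 0 := sub_ne_zero.mpr (Ne.symm h)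
  simp only [fj, gam]
  field_simp
  ring

lemma fj_le_fmax (n : ℕ) (x C : Fin n → ℝ) (k : Fin n) (t : ℝ) :
    fj n x C k t ≤ fmax n x C t :=
  le_trans (le_ciSup (f := fun j => fj n x C j t) (Set.Finite.bddAbove (Set.finite_range _)) k) (le_max_left _ _)

/-- For `C ∈ 𝔾` with `E_j^{(C)} = [α_j, β_j]`: `α_j < β_j` for all `j`,
`β_{j-1} ≤ α_j` for `j = 2, …, n`, and `β_{j-1} = α_j` if and only if
`f_j^{(C)}(γ_{(j-1)j}) ≥ 0`. -/
theorem stmt_8 (n : ℕ) (hn : 1 ≤ n) (x : Fin n → ℝ) (hx : StrictMono x)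
    (C : Fin n → ℝ) (hC : C ∈ Gset n x) (α β : Fin n → ℝ)
    (hE : ∀ j, Ej n x C j = Set.Icc (α j) (β j)) :
    (∀ j : Fin n, α j < β j) ∧
    (∀ j : Fin n, ∀ _ : 0 < j.val,
      β ⟨j.val - 1, lt_of_le_of_lt (Nat.sub_le _ _) j.isLt⟩ ≤ α j ∧
      (β ⟨j.val - 1, lt_of_le_of_lt (Nat.sub_le _ _) j.isLt⟩ = α j ↔
        0 ≤ fj n x C j
          (gam n x C ⟨j.val - 1, lt_of_le_of_lt (Nat.sub_le _ _) j.isLt⟩ j))) := by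
  -- each Ej is nonempty
  have hne : ∀ j : Fin n, (Ej n x C j).Nonempty := by
    intro j
    by_contra h
    have := hC j
    rw [Fj, if_neg h] at this
    exact lt_irrefl 0 this
  -- α j ≤ β j
  have hle : ∀ j : Fin n, α j ≤ β j := by
    intro j
    have h := hne j
    rw [hE j] at h
    exact nonempty_Icc.mp h
  -- α j < β j
  have hab : ∀ j : Fin n, α j < β j := by
    intro j
    rcases lt_or_eq_of_le (hle j) with h | h
    · exact h
    · exfalso
      have hFj := hC j
      rw [Fj, if_pos (hne j)] at hFj
      have h0 : (volume : Measure ℝ) (Ej n x C j) = 0 := by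
        rw [hE j, h, Set.Icc_self]
        exact Real.volume_singleton
      rw [setIntegral_measure_zero _ h0] at hFj
      exact lt_irrefl 0 hFj
  refine ⟨hab, ?_⟩
  intro j hj
  set i : Fin n := ⟨j.val - 1, lt_of_le_of_lt (Nat.sub_le _ _) j.isLt⟩ with hi
  have hij : i < j := by
    rw [Fin.lt_def]
    exact Nat.sub_lt hj one_pos
  have hxij : x i < x j := hx hij
  have hxne : x i ≠ x j := ne_of_lt hxij
  set γ := gam n x C i j with hγ
  -- membership facts
  have hβi : β i ∈ Ej n x C i := by
    rw [hE i]; exact ⟨hle i, le_refl _⟩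
  have hαj : α j ∈ Ej n x C j := by
    rw [hE j]; exact ⟨le_refl _, hle j⟩
  have hβi' : fj n x C i (β i) = fmax n x C (β i) := hβi
  have hαj' : fj n x C j (α j) = fmax n x C (α j) := hαj
  -- at β i : f_i ≥ f_j ; combining with linearity, β i ≤ γ
  have hfiγ : fj n x C i γ = fj n x C j γ := fj_gam n x C i j hxne
  have key : ∀ t : ℝ, fj n x C i t - fj n x C j t = 2 * (x i - x j) * (t - γ) := by
    intro t
    have := fj_sub n x C i j γ t
    rw [hfiγ] at this
    simpa using this
  have hβγ : β i ≤ γ := by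
    have h1 : fj n x C j (β i) ≤ fj n x C i (β i) := by
      rw [hβi']; exact fj_le_fmax n x C j (β i)
    have h2 : 0 ≤ 2 * (x i - x j) * (β i - γ) := by
      rw [← key]; linarith
    nlinarith
  have hγα : γ ≤ α j := by
    have h1 : fj n x C i (α j) ≤ fj n x C j (α j) := by
      rw [hαj']; exact fj_le_fmax n x C i (α j)
    have h2 : 2 * (x i - x j) * (α j - γ) ≤ 0 := by
      rw [← key]; linarith
    nlinarith
  refine ⟨le_trans hβγ hγα, ?_, ?_⟩
  · -- forward: β i = α j → 0 ≤ f_j(γ)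
    intro h
    have hγαj : γ = α j := le_antisymm hγα (h ▸ hβγ)
    have : fj n x C j γ = fmax n x C γ := by rw [hγαj]; exact hαj'
    rw [this]
    exact le_max_right _ _
  · -- backward: 0 ≤ f_j(γ) → β i = α j
    intro hpos
    -- every f_k(γ) ≤ f_j(γ)
    have hall : ∀ k : Fin n, fj n x C k γ ≤ fj n x C j γ := by
      intro k
      rcases lt_or_ge k.val j.val with hk | hk
      · -- k ≤ i
        have hki : k ≤ i := by
          rw [Fin.le_def]
          exact Nat.le_sub_one_of_lt hk
        have hxki : x k ≤ x i := hx.monotone hki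
        have h1 : fj n x C k (β i) ≤ fj n x C i (β i) := by
          rw [hβi']; exact fj_le_fmax n x C k (β i)
        have h2 := fj_sub n x C k i (β i) γ
        rw [← hfiγ]
        nlinarith
      · -- j ≤ k
        have hjk : j ≤ k := by rw [Fin.le_def]; exact hk
        have hxjk : x j ≤ x k := hx.monotone hjk
        have h1 : fj n x C k (α j) ≤ fj n x C j (α j) := by
          rw [hαj']; exact fj_le_fmax n x C k (α j)
        have h2 := fj_sub n x C k j (α j) γ
        nlinarith
    have hsup : (⨆ k : Fin n, fj n x C k γ) = fj n x C j γ := by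
      haveI : Nonempty (Fin n) := ⟨j⟩
      exact le_antisymm (ciSup_le hall)
        (le_ciSup (f := fun k => fj n x C k γ) (Set.Finite.bddAbove (Set.finite_range _)) j)
    have hfmaxγ : fmax n x C γ = fj n x C j γ := by
      rw [fmax, hsup, max_eq_left hpos]
    have hγEj : γ ∈ Ej n x C j := hfmaxγ.symm
    have hγEi : γ ∈ Ej n x C i := by
      show fj n x C i γ = fmax n x C γ
      rw [hfiγ, hfmaxγ]
    rw [hE j] at hγEj
    rw [hE i] at hγEi
    have h1 : γ ≤ β i := hγEi.2
    have h2 : α j ≤ γ := hγEj.1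
    linarith
end

section
/- For every C ∈ 𝔾 and every j ∈ {1, …, n}, the partial derivative of F_j with respect to C_j exists at C and equals (β_j − α_j) + f_j^{(C)}(β_j)/(2(x_{j+1} − x_j)) + f_j^{(C)}(α_j)/(2(x_j − x_{j−1})), where E_j^{(C)} = [α_j, β_j] and the term involving x_{j+1} is omitted when j = n and the term involving x_{j−1} is omitted when j = 1. -/
open MeasureTheory Set
open scoped Classical

lemma diff_aux (ci cj xi xj s : ℝ) (h : xj - xi ≠ 0) :
    (ci - (s - xi)^2) - (cj - (s - xj)^2)
      = 2*(xi - xj)*(s - ((ci - cj)/(2*(xj - xi)) + (xi + xj)/2)) := by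
  field_simp; ring

lemma slope_aux (ci ck xi xk s p : ℝ) :
    (ci - (s - xi)^2) - (ck - (s - xk)^2)
      = ((ci - (p - xi)^2) - (ck - (p - xk)^2)) + 2*(xi - xk)*(s - p) := by ring

lemma sep_le {A B d : ℝ} (hd : A < 0) (h : 0 ≤ 2*A*(B - d)) : B ≤ d := by nlinarith
lemma sep_ge {A B d : ℝ} (hd : A < 0) (h : 2*A*(B - d) ≤ 0) : d ≤ B := by nlinarith
lemma sep_le' {A B d : ℝ} (hd : 0 < A) (h : 2*A*(B - d) ≤ 0) : B ≤ d := by nlinarith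
lemma sep_ge' {A B d : ℝ} (hd : 0 < A) (h : 0 ≤ 2*A*(B - d)) : d ≤ B := by nlinarith

lemma mem_Ej_iff (n : ℕ) (hn : 1 ≤ n) (x C : Fin n → ℝ) (j : Fin n) (s : ℝ) :
    s ∈ Ej n x C j ↔ 0 ≤ fj n x C j s ∧ ∀ i, fj n x C i s ≤ fj n x C j s := by
  have : Nonempty (Fin n) := ⟨⟨0, hn⟩⟩
  have hbdd : BddAbove (Set.range fun i => fj n x C i s) :=
    Set.Finite.bddAbove (Set.finite_range _)
  constructor
  · intro h
    have hmem : fj n x C j s = fmax n x C s := h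
    refine ⟨?_, ?_⟩
    · rw [hmem]; exact le_max_right _ _
    · intro i
      rw [hmem]
      exact le_trans (le_ciSup hbdd i) (le_max_left _ _)
  · rintro ⟨h0, hall⟩
    have h1 : fmax n x C s ≤ fj n x C j s := max_le (ciSup_le hall) h0
    have h2 : fj n x C j s ≤ fmax n x C s :=
      le_trans (le_ciSup hbdd j) (le_max_left _ _)
    exact le_antisymm h2 h1

lemma pos_lt (n : ℕ) (x C : Fin n → ℝ) (j : Fin n) (p q : ℝ)
    (h : 0 < Fj n x C j) (hE : Ej n x C j = Set.Icc p q) : p < q := by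
  by_contra hle
  push_neg at hle
  unfold Fj at h
  split_ifs at h with hne
  · rw [hE] at h
    have hz : (volume : Measure ℝ).restrict (Set.Icc p q) = 0 := by
      rw [Measure.restrict_eq_zero, Real.volume_Icc]
      simp only [ENNReal.ofReal_eq_zero]
      linarith
    rw [hz, integral_zero_measure] at h
    exact lt_irrefl 0 h
  · exact absurd h (lt_irrefl 0)

lemma Cj_pos (n : ℕ) (x C : Fin n → ℝ) (j : Fin n) (p q : ℝ)
    (h : 0 < Fj n x C j) (hE : Ej n x C j = Set.Icc p q) : 0 < C j := by
  by_contra hle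
  push_neg at hle
  unfold Fj at h
  split_ifs at h with hne
  · rw [hE] at h
    have hnp : ∫ t in Set.Icc p q, fmax n x C t ≤ 0 := by
      apply setIntegral_nonpos measurableSet_Icc
      intro s hs
      have hsE : s ∈ Ej n x C j := by rw [hE]; exact hs
      have h1 : fj n x C j s = fmax n x C s := hsE
      rw [← h1]
      have : (s - x j)^2 ≥ 0 := sq_nonneg _
      unfold fj
      linarith
    linarith
  · exact absurd h (lt_irrefl 0)

lemma add_div_swap (B X u v : ℝ) : B + X/(2*(u - v)) = B - X/(2*(v - u)) := by
  rw [show u - v = -(v - u) by ring, mul_neg, div_neg]; ring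

lemma hasDerivAt_of_mem {f g h : ℝ → ℝ} {d t₀ : ℝ}
    (hf : HasDerivAt f d t₀) (hg : HasDerivAt g d t₀)
    (hfg : f t₀ = g t₀) (h0 : h t₀ = f t₀)
    (hmem : ∀ t, h t = f t ∨ h t = g t) : HasDerivAt h d t₀ := by
  rw [hasDerivAt_iff_isLittleO] at hf hg ⊢
  rw [Asymptotics.isLittleO_iff] at hf hg ⊢
  intro c hc
  filter_upwards [hf hc, hg hc] with t h1 h2
  rcases hmem t with he | he
  · rw [he, h0]; exact h1
  · rw [he, h0, hfg]; exact h2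

/-- For `C ∈ 𝔾` with `E_j^{(C)} = [α_j, β_j]`, the partial derivative of `F_j`
in the direction `C_j` exists at `C` and equals
`(β_j - α_j) + f_j^{(C)}(β_j)/(2(x_{j+1} - x_j)) + f_j^{(C)}(α_j)/(2(x_j - x_{j-1}))`,
the corresponding term being omitted when `j = n` (resp. `j = 1`). -/
theorem stmt_12 (n : ℕ) (hn : 1 ≤ n) (x : Fin n → ℝ) (hx : StrictMono x)
    (C : Fin n → ℝ) (hC : C ∈ Gset n x) (α β : Fin n → ℝ)
    (hE : ∀ j, Ej n x C j = Set.Icc (α j) (β j)) :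
    ∀ j : Fin n,
      HasDerivAt (fun t : ℝ => Fj n x (Function.update C j t) j)
        ((β j - α j) +
          (if h : j.val + 1 < n then
              fj n x C j (β j) / (2 * (x ⟨j.val + 1, h⟩ - x j))
            else 0) +
          (if _ : 0 < j.val then
              fj n x C j (α j) /
                (2 * (x j - x ⟨j.val - 1, lt_of_le_of_lt (Nat.sub_le _ _) j.isLt⟩))
            else 0))
        (C j) := by
  intro j
  have inst : Nonempty (Fin n) := ⟨⟨0, hn⟩⟩
  set t₀ := C j with ht₀def
  set jm : Fin n := ⟨j.val - 1, lt_of_le_of_lt (Nat.sub_le _ _) j.isLt⟩ with hjm_def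
  have hαβ : ∀ i, α i < β i := fun i => pos_lt n x C i _ _ (hC i) (hE i)
  have hmemα : ∀ i, α i ∈ Ej n x C i := fun i => by
    rw [hE i]; exact Set.left_mem_Icc.2 (hαβ i).le
  have hmemβ : ∀ i, β i ∈ Ej n x C i := fun i => by
    rw [hE i]; exact Set.right_mem_Icc.2 (hαβ i).le
  have ht₀pos : 0 < t₀ := Cj_pos n x C j _ _ (hC j) (hE j)
  -- functions
  set G : Fin n → ℝ → ℝ := fun i t => (C i - t)/(2*(x j - x i)) + (x i + x j)/2 with hG_def
  set rtf : ℝ → ℝ := fun t => x j - Real.sqrt t with hrtf_def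
  set Rtf : ℝ → ℝ := fun t => x j + Real.sqrt t with hRtf_def
  set a : ℝ → ℝ := fun t => if 0 < j.val then max (G jm t) (rtf t) else rtf t with ha_def
  set b : ℝ → ℝ :=
    fun t => if h : j.val + 1 < n then min (G ⟨j.val+1, h⟩ t) (Rtf t) else Rtf t with hb_def
  -- unfolding helpers
  have hfjC : ∀ s, fj n x C j s = t₀ - (s - x j)^2 := fun s => by rw [ht₀def]; rfl
  have hfj_eq : ∀ (i : Fin n) s, fj n x C i s = C i - (s - x i)^2 := fun _ _ => rfl
  have hfj_upd_j : ∀ t s, fj n x (Function.update C j t) j s = t - (s - x j)^2 := by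
    intro t s; unfold fj; rw [Function.update_self]
  have hfj_upd_ne : ∀ t s (i : Fin n), i ≠ j →
      fj n x (Function.update C j t) i s = fj n x C i s := by
    intro t s i hi; unfold fj; rw [Function.update_of_ne hi]
  have hxinj : ∀ (i : Fin n), i ≠ j → x j - x i ≠ 0 := by
    intro i hi h
    exact hi (hx.injective (sub_eq_zero.1 h).symm)
  have hdiff : ∀ (i : Fin n), i ≠ j → ∀ t s,
      fj n x C i s - (t - (s - x j)^2) = 2*(x i - x j)*(s - G i t) := by
    intro i hi t s
    rw [hfj_eq, hG_def]
    exact diff_aux (C i) t (x i) (x j) s (hxinj i hi)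
  -- index facts
  have hjm_lt : 0 < j.val → jm < j := by
    intro h0; rw [Fin.lt_def, hjm_def]; exact Nat.sub_lt h0 one_pos
  have hjm_ne : 0 < j.val → jm ≠ j := fun h0 => ne_of_lt (hjm_lt h0)
  have hx_jm : 0 < j.val → x jm < x j := fun h0 => hx (hjm_lt h0)
  have hjp_ne : ∀ h : j.val + 1 < n, (⟨j.val+1, h⟩ : Fin n) ≠ j :=
    fun h => Fin.ne_of_val_ne (by simp only [Fin.val_mk]; omega)
  have hx_jp : ∀ h : j.val + 1 < n, x j < x ⟨j.val+1, h⟩ :=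
    fun h => hx (Fin.lt_def.2 (by simp only [Fin.val_mk]; omega))
  have hEmem : ∀ (i : Fin n) s, s ∈ Ej n x C i →
      (0 ≤ fj n x C i s ∧ ∀ i', fj n x C i' s ≤ fj n x C i s) :=
    fun i s hs => (mem_Ej_iff n hn x C i s).1 hs
  -- endpoint bounds at t₀
  have hβjm_lam : 0 < j.val → β jm ≤ G jm t₀ := by
    intro h0
    have h1 := (hEmem jm (β jm) (hmemβ jm)).2 j
    have h2 := hdiff jm (hjm_ne h0) t₀ (β jm)
    have h3 : 0 ≤ 2*(x jm - x j)*(β jm - G jm t₀) := by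
      rw [← h2]; have := hfjC (β jm); linarith
    exact sep_le (by linarith [hx_jm h0]) h3
  have hlam_α : 0 < j.val → G jm t₀ ≤ α j := by
    intro h0
    have h1 := (hEmem j (α j) (hmemα j)).2 jm
    have h2 := hdiff jm (hjm_ne h0) t₀ (α j)
    have h3 : 2*(x jm - x j)*(α j - G jm t₀) ≤ 0 := by
      rw [← h2]; have := hfjC (α j); linarith
    exact sep_ge (by linarith [hx_jm h0]) h3
  have hrt_α : rtf t₀ ≤ α j := by
    have h0 := (hEmem j (α j) (hmemα j)).1
    rw [hfjC] at h0
    have h4 : |α j - x j| ≤ Real.sqrt t₀ := by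
      rw [← Real.sqrt_sq_eq_abs]; exact Real.sqrt_le_sqrt (by linarith)
    have h5 := (abs_le.1 h4).1
    rw [hrtf_def]; simp only []; linarith
  have hβ_Rt : β j ≤ Rtf t₀ := by
    have h0 := (hEmem j (β j) (hmemβ j)).1
    rw [hfjC] at h0
    have h4 : |β j - x j| ≤ Real.sqrt t₀ := by
      rw [← Real.sqrt_sq_eq_abs]; exact Real.sqrt_le_sqrt (by linarith)
    have h5 := (abs_le.1 h4).2
    rw [hRtf_def]; simp only []; linarith
  have hμ_β : ∀ h : j.val + 1 < n, β j ≤ G ⟨j.val+1, h⟩ t₀ := by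
    intro h
    have h1 := (hEmem j (β j) (hmemβ j)).2 ⟨j.val+1, h⟩
    have h2 := hdiff ⟨j.val+1, h⟩ (hjp_ne h) t₀ (β j)
    have h3 : 2*(x ⟨j.val+1, h⟩ - x j)*(β j - G ⟨j.val+1, h⟩ t₀) ≤ 0 := by
      rw [← h2]; have := hfjC (β j); linarith
    exact sep_le' (by linarith [hx_jp h]) h3
  have hαjp_μ : ∀ h : j.val + 1 < n, G ⟨j.val+1, h⟩ t₀ ≤ α ⟨j.val+1, h⟩ := by
    intro h
    have h1 := (hEmem ⟨j.val+1, h⟩ (α ⟨j.val+1, h⟩) (hmemα _)).2 j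
    have h2 := hdiff ⟨j.val+1, h⟩ (hjp_ne h) t₀ (α ⟨j.val+1, h⟩)
    have h3 : 0 ≤ 2*(x ⟨j.val+1, h⟩ - x j)*(α ⟨j.val+1, h⟩ - G ⟨j.val+1, h⟩ t₀) := by
      rw [← h2]; have := hfjC (α ⟨j.val+1, h⟩); linarith
    exact sep_ge' (by linarith [hx_jp h]) h3
  have ha_α : a t₀ ≤ α j := by
    rw [ha_def]; simp only []
    split_ifs with h0
    · exact max_le (hlam_α h0) hrt_α
    · exact hrt_α
  have hβ_b : β j ≤ b t₀ := by
    rw [hb_def]; simp only []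
    split_ifs with h1
    · exact le_min (hμ_β h1) hβ_Rt
    · exact hβ_Rt
  -- the superset direction: Ej ⊆ Icc (a t) (b t), for every t
  have hsupset : ∀ t, Ej n x (Function.update C j t) j ⊆ Set.Icc (a t) (b t) := by
    intro t s hs
    obtain ⟨h0, hall⟩ := (mem_Ej_iff n hn x _ j s).1 hs
    rw [hfj_upd_j] at h0
    have hsq : (s - x j)^2 ≤ t := by linarith
    have h4 : |s - x j| ≤ Real.sqrt t := by
      rw [← Real.sqrt_sq_eq_abs]; exact Real.sqrt_le_sqrt hsq
    have habs := abs_le.1 h4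
    constructor
    · rw [ha_def]; simp only []
      split_ifs with hj0
      · apply max_le
        · have h1 := hall jm
          rw [hfj_upd_j, hfj_upd_ne t s jm (hjm_ne hj0)] at h1
          have h2 := hdiff jm (hjm_ne hj0) t s
          exact sep_ge (A := x jm - x j) (B := s) (d := G jm t)
            (by linarith [hx_jm hj0]) (by linarith)
        · rw [hrtf_def]; simp only []; linarith [habs.1]
      · rw [hrtf_def]; simp only []; linarith [habs.1]
    · rw [hb_def]; simp only []
      split_ifs with hj1
      · apply le_min
        · have h1 := hall ⟨j.val+1, hj1⟩
          rw [hfj_upd_j, hfj_upd_ne t s _ (hjp_ne hj1)] at h1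
          have h2 := hdiff ⟨j.val+1, hj1⟩ (hjp_ne hj1) t s
          exact sep_le' (A := x ⟨j.val+1, hj1⟩ - x j) (B := s) (d := G ⟨j.val+1, hj1⟩ t)
            (by linarith [hx_jp hj1]) (by linarith)
        · rw [hRtf_def]; simp only []; linarith [habs.2]
      · rw [hRtf_def]; simp only []; linarith [habs.2]
  -- the subset direction
  have hsubset : ∀ t, 0 < t → (0 < j.val → α jm < a t) →
      (∀ h : j.val+1 < n, b t < β ⟨j.val+1, h⟩) →
      Set.Icc (a t) (b t) ⊆ Ej n x (Function.update C j t) j := by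
    intro t ht hL hR s hs
    obtain ⟨hsa, hsb⟩ := hs
    have hart : rtf t ≤ a t := by
      rw [ha_def]; simp only []; split_ifs
      exacts [le_max_right _ _, le_refl _]
    have hbRt : b t ≤ Rtf t := by
      rw [hb_def]; simp only []; split_ifs
      exacts [min_le_right _ _, le_refl _]
    have h1 : x j - Real.sqrt t ≤ s := by
      have := le_trans hart hsa; rw [hrtf_def] at this; exact this
    have h2 : s ≤ x j + Real.sqrt t := by
      have := le_trans hsb hbRt; rw [hRtf_def] at this; exact this
    have hsq : (s - x j)^2 ≤ t := by
      have h3 : (s - x j)^2 ≤ (Real.sqrt t)^2 := sq_le_sq' (by linarith) (by linarith)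
      rwa [Real.sq_sqrt ht.le] at h3
    rw [mem_Ej_iff n hn]
    constructor
    · rw [hfj_upd_j]; linarith
    · intro i
      rcases eq_or_ne i j with rfl | hij
      · exact le_refl _
      rw [hfj_upd_j, hfj_upd_ne t s i hij]
      rcases lt_or_gt_of_ne hij with hlt | hgt
      · -- i < j
        have hival : i.val < j.val := Fin.lt_def.1 hlt
        have hj0 : 0 < j.val := by omega
        have hGs : G jm t ≤ s := by
          refine le_trans (le_trans ?_ hsa) (le_refl s)
          rw [ha_def]; simp only [if_pos hj0]; exact le_max_left _ _
        have hjmle : fj n x C jm s - (t - (s - x j)^2) ≤ 0 := by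
          rw [hdiff jm (hjm_ne hj0) t s]
          have hc1 : 2*(x jm - x j) ≤ 0 := by linarith [hx_jm hj0]
          have hc2 : 0 ≤ s - G jm t := by linarith
          exact mul_nonpos_of_nonpos_of_nonneg hc1 hc2
        rcases eq_or_ne i jm with rfl | hijm
        · linarith
        · have hival2 : i.val < jm.val := by
            have : i.val ≠ jm.val := fun hh => hijm (Fin.ext hh)
            rw [hjm_def] at this ⊢
            simp only [Fin.val_mk] at this ⊢
            omega
          have hxi : x i < x jm := hx (Fin.lt_def.2 hival2)
          have hiα := (hEmem jm (α jm) (hmemα jm)).2 i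
          have hs_gt : α jm < s := lt_of_lt_of_le (hL hj0) hsa
          have hslope : fj n x C i s - fj n x C jm s
              = (fj n x C i (α jm) - fj n x C jm (α jm)) + 2*(x i - x jm)*(s - α jm) := by
            rw [hfj_eq, hfj_eq, hfj_eq, hfj_eq]
            exact slope_aux (C i) (C jm) (x i) (x jm) s (α jm)
          have hneg : 2*(x i - x jm)*(s - α jm) < 0 :=
            mul_neg_of_neg_of_pos (by linarith) (by linarith)
          linarith
      · -- j < i
        have hival : j.val < i.val := Fin.lt_def.1 hgt
        have hj1 : j.val + 1 < n := lt_of_le_of_lt (by omega) i.isLt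
        have hGs : s ≤ G ⟨j.val+1, hj1⟩ t := by
          refine le_trans hsb ?_
          rw [hb_def]; simp only []; rw [dif_pos hj1]; exact min_le_left _ _
        have hjple : fj n x C ⟨j.val+1, hj1⟩ s - (t - (s - x j)^2) ≤ 0 := by
          rw [hdiff _ (hjp_ne hj1) t s]
          have hc1 : 0 ≤ 2*(x ⟨j.val+1, hj1⟩ - x j) := by linarith [hx_jp hj1]
          have hc2 : s - G ⟨j.val+1, hj1⟩ t ≤ 0 := by linarith
          exact mul_nonpos_of_nonneg_of_nonpos hc1 hc2
        rcases eq_or_ne i ⟨j.val+1, hj1⟩ with rfl | hijp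
        · linarith
        · have hival2 : (⟨j.val+1, hj1⟩ : Fin n).val < i.val := by
            have : i.val ≠ j.val + 1 := fun hh => hijp (Fin.ext (by simpa using hh))
            simp only [Fin.val_mk]
            omega
          have hxi : x ⟨j.val+1, hj1⟩ < x i := hx (Fin.lt_def.2 hival2)
          have hiβ := (hEmem ⟨j.val+1, hj1⟩ (β ⟨j.val+1, hj1⟩) (hmemβ _)).2 i
          have hs_lt : s < β ⟨j.val+1, hj1⟩ := lt_of_le_of_lt hsb (hR hj1)
          have hslope : fj n x C i s - fj n x C ⟨j.val+1, hj1⟩ s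
              = (fj n x C i (β ⟨j.val+1, hj1⟩) - fj n x C ⟨j.val+1, hj1⟩ (β ⟨j.val+1, hj1⟩))
                + 2*(x i - x ⟨j.val+1, hj1⟩)*(s - β ⟨j.val+1, hj1⟩) := by
            rw [hfj_eq, hfj_eq, hfj_eq, hfj_eq]
            exact slope_aux _ _ _ _ _ _
          have hneg : 2*(x i - x ⟨j.val+1, hj1⟩)*(s - β ⟨j.val+1, hj1⟩) < 0 :=
            mul_neg_of_pos_of_neg (by linarith) (by linarith)
          linarith
  -- strictness at t₀ and endpoint identification
  have hL₀ : 0 < j.val → α jm < a t₀ := by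
    intro h0
    have h1 : G jm t₀ ≤ a t₀ := by
      rw [ha_def]; simp only [if_pos h0]; exact le_max_left _ _
    linarith [hαβ jm, hβjm_lam h0]
  have hR₀ : ∀ h : j.val + 1 < n, b t₀ < β ⟨j.val+1, h⟩ := by
    intro h
    have h1 : b t₀ ≤ G ⟨j.val+1, h⟩ t₀ := by
      rw [hb_def]; simp only []; rw [dif_pos h]; exact min_le_left _ _
    linarith [hαjp_μ h, hαβ ⟨j.val+1, h⟩]
  have hCupd : Function.update C j t₀ = C := by rw [ht₀def]; exact Function.update_eq_self j C
  have hEt₀ : Ej n x C j = Set.Icc (a t₀) (b t₀) := by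
    rw [← hCupd]
    exact subset_antisymm (hsupset t₀) (hsubset t₀ ht₀pos hL₀ hR₀)
  have hab₀ : a t₀ ≤ b t₀ := le_trans ha_α (le_trans (hαβ j).le hβ_b)
  have hIccEq : Set.Icc (α j) (β j) = Set.Icc (a t₀) (b t₀) := by rw [← hE j]; exact hEt₀
  have haα : a t₀ = α j := by
    refine le_antisymm ha_α ?_
    have h1 : a t₀ ∈ Set.Icc (α j) (β j) := by
      rw [hIccEq]; exact Set.left_mem_Icc.2 hab₀
    exact h1.1
  have hbβ : b t₀ = β j := by
    refine le_antisymm ?_ hβ_b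
    have h1 : b t₀ ∈ Set.Icc (α j) (β j) := by
      rw [hIccEq]; exact Set.right_mem_Icc.2 hab₀
    exact h1.2
  -- continuity
  have hcont_rt : Continuous rtf := by
    rw [hrtf_def]; exact continuous_const.sub Real.continuous_sqrt
  have hcont_Rt : Continuous Rtf := by
    rw [hRtf_def]; exact continuous_const.add Real.continuous_sqrt
  have hcont_G : ∀ i, Continuous (G i) := by
    intro i
    rw [hG_def]
    exact ((continuous_const.sub continuous_id).div_const _).add continuous_const
  have hcont_a : Continuous a := by
    by_cases h0 : 0 < j.val
    · rw [ha_def]; simp only [if_pos h0]; exact (hcont_G jm).max hcont_rt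
    · rw [ha_def]; simp only [if_neg h0]; exact hcont_rt
  have hcont_b : Continuous b := by
    by_cases h1 : j.val + 1 < n
    · rw [hb_def]; simp only [dif_pos h1]; exact (hcont_G _).min hcont_Rt
    · rw [hb_def]; simp only [dif_neg h1]; exact hcont_Rt
  -- eventual equality with the explicit formula
  have hev : (fun t => Fj n x (Function.update C j t) j) =ᶠ[nhds t₀]
      (fun t => (t * b t - (b t - x j)^3/3) - (t * a t - (a t - x j)^3/3)) := by
    have ev1 : ∀ᶠ t in nhds t₀, 0 < t := eventually_gt_nhds ht₀pos
    have ev2 : ∀ᶠ t in nhds t₀, a t < b t :=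
      hcont_a.continuousAt.eventually_lt hcont_b.continuousAt
        (by rw [haα, hbβ]; exact hαβ j)
    have ev3 : ∀ᶠ t in nhds t₀, (0 < j.val → α jm < a t) := by
      by_cases h0 : 0 < j.val
      · have := (continuousAt_const (y := α jm)).eventually_lt hcont_a.continuousAt (hL₀ h0)
        filter_upwards [this] with t ht _
        exact ht
      · filter_upwards with t hh
        exact absurd hh h0
    have ev4 : ∀ᶠ t in nhds t₀, (∀ h : j.val + 1 < n, b t < β ⟨j.val+1, h⟩) := by
      by_cases h1 : j.val + 1 < n
      · have := hcont_b.continuousAt.eventually_lt (continuousAt_const (y := β ⟨j.val+1, h1⟩))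
          (hR₀ h1)
        filter_upwards [this] with t ht h
        exact ht
      · filter_upwards with t h
        exact absurd h h1
    filter_upwards [ev1, ev2, ev3, ev4] with t ht1 ht2 ht3 ht4
    have hset : Ej n x (Function.update C j t) j = Set.Icc (a t) (b t) :=
      subset_antisymm (hsupset t) (hsubset t ht1 ht3 ht4)
    show Fj n x (Function.update C j t) j = _
    unfold Fj
    rw [if_pos (by rw [hset]; exact Set.nonempty_Icc.2 ht2.le)]
    rw [hset]
    have hEqOn : Set.EqOn (fmax n x (Function.update C j t)) (fun s => t - (s - x j)^2)
        (Set.Icc (a t) (b t)) := by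
      intro s hs
      have hsE : s ∈ Ej n x (Function.update C j t) j := by rw [hset]; exact hs
      have h1 : fj n x (Function.update C j t) j s = fmax n x (Function.update C j t) s := hsE
      simp only []
      rw [← h1, hfj_upd_j]
    rw [MeasureTheory.setIntegral_congr_fun measurableSet_Icc hEqOn]
    rw [MeasureTheory.integral_Icc_eq_integral_Ioc, ← intervalIntegral.integral_of_le ht2.le]
    have hd : ∀ s ∈ Set.uIcc (a t) (b t),
        HasDerivAt (fun u => t*u - (u - x j)^3/3) (t - (s - x j)^2) s := by
      intro s _
      have h1 := ((hasDerivAt_id s).const_mul t).sub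
        ((((hasDerivAt_id s).sub_const (x j)).pow 3).div_const 3)
      refine h1.congr_deriv (Eq.symm ?_)
      norm_num
    rw [intervalIntegral.integral_eq_sub_of_hasDerivAt hd
      (Continuous.intervalIntegrable
        (continuous_const.sub ((continuous_id.sub continuous_const).pow 2)) _ _)]
  -- building block derivatives
  have hsqrt_ne : Real.sqrt t₀ ≠ 0 := ne_of_gt (Real.sqrt_pos.2 ht₀pos)
  have hsq_sqrt : Real.sqrt t₀ ^ 2 = t₀ := Real.sq_sqrt ht₀pos.le
  have hds := Real.hasDerivAt_sqrt (ne_of_gt ht₀pos)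
  have hrt_d : HasDerivAt rtf (-(1/(2*Real.sqrt t₀))) t₀ := by
    rw [hrtf_def]
    exact ((hasDerivAt_const t₀ (x j)).sub hds).congr_deriv (by ring)
  have hRt_d : HasDerivAt Rtf (1/(2*Real.sqrt t₀)) t₀ := by
    rw [hRtf_def]
    exact ((hasDerivAt_const t₀ (x j)).add hds).congr_deriv (by ring)
  have hrt_phi : HasDerivAt (fun t => t * rtf t - (rtf t - x j)^3/3) (rtf t₀) t₀ := by
    have h1 := ((hasDerivAt_id t₀).mul hrt_d).sub
      (((hrt_d.sub_const (x j)).pow 3).div_const 3)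
    refine h1.congr_deriv (Eq.symm ?_)
    simp only [id]
    have h5 : rtf t₀ = x j - Real.sqrt t₀ := by rw [hrtf_def]
    rw [h5]
    field_simp
    ring_nf
    rw [hsq_sqrt]; ring
  have hRt_phi : HasDerivAt (fun t => t * Rtf t - (Rtf t - x j)^3/3) (Rtf t₀) t₀ := by
    have h1 := ((hasDerivAt_id t₀).mul hRt_d).sub
      (((hRt_d.sub_const (x j)).pow 3).div_const 3)
    refine h1.congr_deriv (Eq.symm ?_)
    simp only [id]
    have h5 : Rtf t₀ = x j + Real.sqrt t₀ := by rw [hRtf_def]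
    rw [h5]
    field_simp
    ring_nf
    rw [hsq_sqrt]; ring
  have hG_phi : ∀ (i : Fin n), i ≠ j →
      HasDerivAt (fun t => t * G i t - (G i t - x j)^3/3)
        (G i t₀ - (t₀ - (G i t₀ - x j)^2)/(2*(x j - x i))) t₀ := by
    intro i hi
    have hGd : HasDerivAt (G i) (-(1/(2*(x j - x i)))) t₀ := by
      rw [hG_def]
      have h1 := (((hasDerivAt_const t₀ (C i)).sub (hasDerivAt_id t₀)).div_const
        (2*(x j - x i))).add_const ((x i + x j)/2)
      refine h1.congr_deriv (Eq.symm ?_)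
      ring
    have h1 := ((hasDerivAt_id t₀).mul hGd).sub
      (((hGd.sub_const (x j)).pow 3).div_const 3)
    refine h1.congr_deriv (Eq.symm ?_)
    simp only [id]
    have hxne := hxinj i hi
    field_simp
    ring
  have hfjα_rt : α j = rtf t₀ → fj n x C j (α j) = 0 := by
    intro h
    rw [hfjC, h, hrtf_def]
    simp only []
    nlinarith [hsq_sqrt]
  have hfjβ_Rt : β j = Rtf t₀ → fj n x C j (β j) = 0 := by
    intro h
    rw [hfjC, h, hRtf_def]
    simp only []
    nlinarith [hsq_sqrt]
  set DA : ℝ := α j - (if 0 < j.val then fj n x C j (α j)/(2*(x j - x jm)) else 0) with hDA_def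
  set DB : ℝ := β j + (if h : j.val + 1 < n then
      fj n x C j (β j)/(2*(x ⟨j.val+1, h⟩ - x j)) else 0) with hDB_def
  have hA : HasDerivAt (fun t => t * a t - (a t - x j)^3/3) DA t₀ := by
    by_cases hj0 : 0 < j.val
    · have haeq_fun : ∀ t, a t = max (G jm t) (rtf t) := fun t => by
        rw [ha_def]; simp only [if_pos hj0]
      have hGder := hG_phi jm (hjm_ne hj0)
      rcases lt_trichotomy (G jm t₀) (rtf t₀) with hc | hc | hc
      · have hev' : (fun t => t * a t - (a t - x j)^3/3) =ᶠ[nhds t₀]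
            (fun t => t * rtf t - (rtf t - x j)^3/3) := by
          filter_upwards [(hcont_G jm).continuousAt.eventually_lt hcont_rt.continuousAt hc]
            with t ht
          rw [haeq_fun t, max_eq_right ht.le]
        have haeq : α j = rtf t₀ := by rw [← haα, haeq_fun, max_eq_right hc.le]
        have hfj0 := hfjα_rt haeq
        have hder := hrt_phi.congr_of_eventuallyEq hev'
        refine hder.congr_deriv (Eq.symm ?_)
        rw [hDA_def, if_pos hj0, hfj0, haeq]; simp
      · have haeq : α j = rtf t₀ := by rw [← haα, haeq_fun, hc, max_self]
        have hfj0 := hfjα_rt haeq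
        have hd2 : HasDerivAt (fun t => t * rtf t - (rtf t - x j)^3/3) DA t₀ := by
          convert hrt_phi using 1
          rw [hDA_def, if_pos hj0, hfj0, haeq]; simp
        have hd1 : HasDerivAt (fun t => t * G jm t - (G jm t - x j)^3/3) DA t₀ := by
          convert hGder using 1
          have hGα : G jm t₀ = α j := by rw [haeq, hc]
          rw [hDA_def, if_pos hj0, hGα, hfjC]
        refine hasDerivAt_of_mem hd1 hd2 ?_ ?_ ?_
        · rw [hc]
        · rw [haeq_fun, hc, max_self]
        · intro t
          rcases max_choice (G jm t) (rtf t) with h | h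
          · left; rw [haeq_fun, h]
          · right; rw [haeq_fun, h]
      · have hev' : (fun t => t * a t - (a t - x j)^3/3) =ᶠ[nhds t₀]
            (fun t => t * G jm t - (G jm t - x j)^3/3) := by
          filter_upwards [hcont_rt.continuousAt.eventually_lt (hcont_G jm).continuousAt hc]
            with t ht
          rw [haeq_fun t, max_eq_left ht.le]
        have haeq : α j = G jm t₀ := by rw [← haα, haeq_fun, max_eq_left hc.le]
        have hder := hGder.congr_of_eventuallyEq hev'
        refine hder.congr_deriv (Eq.symm ?_)
        rw [hDA_def, if_pos hj0, haeq, hfjC]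
    · have haeq_fun : ∀ t, a t = rtf t := fun t => by
        rw [ha_def]; simp only [if_neg hj0]
      have hfun : (fun t => t * a t - (a t - x j)^3/3)
          = (fun t => t * rtf t - (rtf t - x j)^3/3) := by
        funext t; rw [haeq_fun t]
      rw [hfun]
      convert hrt_phi using 1
      rw [hDA_def, if_neg hj0, sub_zero, ← haα, haeq_fun]
  have hB : HasDerivAt (fun t => t * b t - (b t - x j)^3/3) DB t₀ := by
    by_cases hj1 : j.val + 1 < n
    · have hbeq_fun : ∀ t, b t = min (G ⟨j.val+1, hj1⟩ t) (Rtf t) := fun t => by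
        rw [hb_def]; simp only [dif_pos hj1]
      have hGder := hG_phi ⟨j.val+1, hj1⟩ (hjp_ne hj1)
      have hxne : x j - x ⟨j.val+1, hj1⟩ ≠ 0 := hxinj _ (hjp_ne hj1)
      rcases lt_trichotomy (Rtf t₀) (G ⟨j.val+1, hj1⟩ t₀) with hc | hc | hc
      · have hev' : (fun t => t * b t - (b t - x j)^3/3) =ᶠ[nhds t₀]
            (fun t => t * Rtf t - (Rtf t - x j)^3/3) := by
          filter_upwards [hcont_Rt.continuousAt.eventually_lt
            (hcont_G ⟨j.val+1, hj1⟩).continuousAt hc] with t ht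
          rw [hbeq_fun t, min_eq_right ht.le]
        have hbeq : β j = Rtf t₀ := by rw [← hbβ, hbeq_fun, min_eq_right hc.le]
        have hfj0 := hfjβ_Rt hbeq
        have hder := hRt_phi.congr_of_eventuallyEq hev'
        refine hder.congr_deriv (Eq.symm ?_)
        rw [hDB_def, dif_pos hj1, hfj0, hbeq]; simp
      · have hbeq : β j = Rtf t₀ := by rw [← hbβ, hbeq_fun, ← hc, min_self]
        have hfj0 := hfjβ_Rt hbeq
        have hd2 : HasDerivAt (fun t => t * Rtf t - (Rtf t - x j)^3/3) DB t₀ := by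
          convert hRt_phi using 1
          rw [hDB_def, dif_pos hj1, hfj0, hbeq]; simp
        have hd1 : HasDerivAt (fun t => t * G ⟨j.val+1, hj1⟩ t
            - (G ⟨j.val+1, hj1⟩ t - x j)^3/3) DB t₀ := by
          convert hGder using 1
          have hGβ : G ⟨j.val+1, hj1⟩ t₀ = β j := by rw [hbeq, hc]
          rw [hDB_def, dif_pos hj1, hGβ, hfjC]
          exact add_div_swap _ _ _ _
        refine hasDerivAt_of_mem hd1 hd2 ?_ ?_ ?_
        · rw [hc]
        · rw [hbeq_fun, hc, min_self]
        · intro t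
          rcases min_choice (G ⟨j.val+1, hj1⟩ t) (Rtf t) with h | h
          · left; rw [hbeq_fun, h]
          · right; rw [hbeq_fun, h]
      · have hev' : (fun t => t * b t - (b t - x j)^3/3) =ᶠ[nhds t₀]
            (fun t => t * G ⟨j.val+1, hj1⟩ t - (G ⟨j.val+1, hj1⟩ t - x j)^3/3) := by
          filter_upwards [(hcont_G ⟨j.val+1, hj1⟩).continuousAt.eventually_lt
            hcont_Rt.continuousAt hc] with t ht
          rw [hbeq_fun t, min_eq_left ht.le]
        have hbeq : β j = G ⟨j.val+1, hj1⟩ t₀ := by rw [← hbβ, hbeq_fun, min_eq_left hc.le]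
        have hder := hGder.congr_of_eventuallyEq hev'
        refine hder.congr_deriv (Eq.symm ?_)
        rw [hDB_def, dif_pos hj1, hbeq, hfjC]
        exact add_div_swap _ _ _ _
    · have hbeq_fun : ∀ t, b t = Rtf t := fun t => by
        rw [hb_def]; simp only [dif_neg hj1]
      have hfun : (fun t => t * b t - (b t - x j)^3/3)
          = (fun t => t * Rtf t - (Rtf t - x j)^3/3) := by
        funext t; rw [hbeq_fun t]
      rw [hfun]
      convert hRt_phi using 1
      rw [hDB_def, dif_neg hj1, add_zero, ← hbβ, hbeq_fun]
  have hmain := (hB.sub hA).congr_of_eventuallyEq hev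
  refine hmain.congr_deriv (Eq.symm ?_)
  rw [hDB_def, hDA_def]
  split_ifs with h1 h2 h2 <;> ring
end

section
/- The map F is coercive on the nonnegative orthant: there exist constants δ ∈ (0,1) and M > 0 such that for every C ∈ ℝ^n with C_j ≥ 0 for all j and with Euclidean norm ‖C‖ ≥ M√n, one has F(C) · C ≥ (δ/√n)‖C‖^2. In particular, F(C) · C / ‖C‖ → ∞ as ‖C‖ → ∞ with C ranging over the nonnegative orthant. -/
open MeasureTheory Set
open scoped Classical

lemma fj_cont (n : ℕ) (x C : Fin n → ℝ) (j : Fin n) : Continuous (fj n x C j) := by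
  unfold fj; continuity

lemma fmax_cont (n : ℕ) (hn : 1 ≤ n) (x C : Fin n → ℝ) : Continuous (fmax n x C) := by
  haveI : Nonempty (Fin n) := ⟨⟨0, hn⟩⟩
  have h1 : Continuous (fun t => ⨆ j, fj n x C j t) := by
    have h2 := Continuous.finset_sup'_apply (s := (Finset.univ : Finset (Fin n)))
      Finset.univ_nonempty (f := fun j => fj n x C j) (fun i _ => fj_cont n x C i)
    convert h2 using 2 with t
    exact (Finset.sup'_univ_eq_ciSup _).symm
  exact h1.max continuous_const

lemma fmax_nonneg (n : ℕ) (x C : Fin n → ℝ) (t : ℝ) : 0 ≤ fmax n x C t :=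
  le_max_right _ _

lemma Ej_meas (n : ℕ) (hn : 1 ≤ n) (x C : Fin n → ℝ) (j : Fin n) :
    MeasurableSet (Ej n x C j) :=
  (isClosed_eq (fj_cont n x C j) (fmax_cont n hn x C)).measurableSet

lemma Fj_nonneg (n : ℕ) (hn : 1 ≤ n) (x C : Fin n → ℝ) (j : Fin n) :
    0 ≤ Fj n x C j := by
  unfold Fj
  split
  · exact setIntegral_nonneg (Ej_meas n hn x C j) (fun t _ => fmax_nonneg n x C t)
  · exact le_refl 0

lemma key_lemma (n : ℕ) (hn : 1 ≤ n) (x : Fin n → ℝ) (hx : StrictMono x) :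
    ∃ d : ℝ, 0 < d ∧ d ≤ 1 ∧ ∀ C : Fin n → ℝ, (∀ j, 0 ≤ C j) → ∀ jst : Fin n,
      (∀ i, C i ≤ C jst) → 2 * d ^ 2 ≤ C jst → d * C jst / 2 ≤ Fj n x C jst := by
  haveI : Nonempty (Fin n) := ⟨⟨0, hn⟩⟩
  set g : Fin n × Fin n → ℝ := fun p => if p.1 = p.2 then 1 else abs (x p.1 - x p.2) / 2 with hg
  set d : ℝ := Finset.univ.inf' Finset.univ_nonempty g with hd
  have hdle : ∀ p : Fin n × Fin n, d ≤ g p := fun p => Finset.inf'_le g (Finset.mem_univ p)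
  have hdpos : 0 < d := by
    rw [hd, Finset.lt_inf'_iff]
    intro p _
    by_cases h : p.1 = p.2
    · simp [hg, h]
    · have : x p.1 ≠ x p.2 := fun he => h (hx.injective he)
      simp only [hg, if_neg h]
      have : |x p.1 - x p.2| > 0 := abs_pos.mpr (sub_ne_zero.mpr this)
      linarith
  have hd1 : d ≤ 1 := by
    have := hdle (⟨0, hn⟩, ⟨0, hn⟩)
    simpa [hg] using this
  refine ⟨d, hdpos, hd1, ?_⟩
  intro C hC jst hmax hbig
  set c := C jst with hc
  have hc0 : 0 ≤ c := hC jst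
  -- distance separation
  have hsep : ∀ i : Fin n, i ≠ jst → 2 * d ≤ |x i - x jst| := by
    intro i hi
    have := hdle (i, jst)
    simp only [hg, if_neg hi] at this
    linarith
  -- the interval I is inside Ej
  have hI : Icc (x jst) (x jst + d) ⊆ Ej n x C jst := by
    intro t ht
    obtain ⟨ht1, ht2⟩ := ht
    have hdist : ∀ i : Fin n, (t - x jst) ^ 2 ≤ (t - x i) ^ 2 := by
      intro i
      by_cases hij : i = jst
      · subst hij; exact le_refl _
      · have hs := hsep i hij
        rcases lt_or_gt_of_ne (fun he : x i = x jst => hij (hx.injective he)) with h | h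
        · nlinarith [abs_nonneg (x i - x jst)]
        · have habs : |x i - x jst| = x i - x jst := abs_of_pos (by linarith)
          rw [habs] at hs
          nlinarith
    have hfle : ∀ i : Fin n, fj n x C i t ≤ fj n x C jst t := by
      intro i
      unfold fj
      have := hmax i
      have := hdist i
      linarith
    have hpos : 0 ≤ fj n x C jst t := by
      unfold fj
      nlinarith
    have hsup : (⨆ i, fj n x C i t) = fj n x C jst t := by
      apply le_antisymm
      · exact ciSup_le hfle
      · exact le_ciSup (Set.Finite.bddAbove (Set.finite_range (fun i => fj n x C i t))) jst
    show fj n x C jst t = fmax n x C t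
    rw [fmax, hsup, max_eq_left hpos]
  -- Ej is contained in a compact interval
  set s := Real.sqrt c with hs
  have hEsub : Ej n x C jst ⊆ Icc (x jst - s) (x jst + s) := by
    intro t ht
    have h1 : fj n x C jst t = fmax n x C t := ht
    have h2 : 0 ≤ fj n x C jst t := h1 ▸ fmax_nonneg n x C t
    have h3 : (t - x jst) ^ 2 ≤ c := by unfold fj at h2; linarith
    have h4 : |t - x jst| ≤ s := by
      rw [hs]
      exact Real.abs_le_sqrt h3
    rw [abs_le] at h4
    constructor <;> linarith [h4.1, h4.2]
  -- integrability
  have hint : IntegrableOn (fmax n x C) (Ej n x C jst) := by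
    apply IntegrableOn.mono_set (t := Icc (x jst - s) (x jst + s)) _ hEsub
    exact (fmax_cont n hn x C).integrableOn_Icc
  have hIint : IntegrableOn (fmax n x C) (Icc (x jst) (x jst + d)) :=
    (fmax_cont n hn x C).integrableOn_Icc
  -- nonempty
  have hne : (Ej n x C jst).Nonempty :=
    ⟨x jst, hI ⟨le_refl _, by linarith⟩⟩
  have hFj : Fj n x C jst = ∫ t in Ej n x C jst, fmax n x C t := by
    rw [Fj, if_pos hne]
  -- lower bound on the interval integral
  have hvol : (volume (Icc (x jst) (x jst + d))).toReal = d := by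
    rw [Real.volume_Icc]
    simp
    linarith
  have h5 : (c - d ^ 2) * d ≤ ∫ t in Icc (x jst) (x jst + d), fmax n x C t := by
    have := setIntegral_ge_of_const_le (μ := volume) (c := c - d ^ 2)
      (s := Icc (x jst) (x jst + d)) (f := fmax n x C) measurableSet_Icc
      (by rw [Real.volume_Icc]; exact ENNReal.ofReal_ne_top)
      (fun t ht => by
        have := hI ht
        have h1 : fj n x C jst t = fmax n x C t := this
        obtain ⟨ht1, ht2⟩ := ht
        unfold fj at h1
        nlinarith [h1])
      hIint
    rw [measureReal_def, hvol, smul_eq_mul] at this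
    linarith
  have h6 : (∫ t in Icc (x jst) (x jst + d), fmax n x C t) ≤ ∫ t in Ej n x C jst, fmax n x C t := by
    apply setIntegral_mono_set hint
    · exact Filter.Eventually.of_forall (fun t => fmax_nonneg n x C t)
    · exact HasSubset.Subset.eventuallyLE hI
  rw [hFj]
  nlinarith [hdpos]

/-- `F` is coercive on the nonnegative orthant: there are `δ ∈ (0,1)`, `M > 0`
with `F(C)·C ≥ (δ/√n)‖C‖²` whenever `C ≥ 0` and `‖C‖ ≥ M√n`; in particular
`F(C)·C/‖C‖ → ∞` as `‖C‖ → ∞` over the nonnegative orthant. -/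
theorem stmt_15 (n : ℕ) (hn : 1 ≤ n) (x : Fin n → ℝ) (hx : StrictMono x) :
    (∃ δ ∈ Set.Ioo (0 : ℝ) 1, ∃ M : ℝ, 0 < M ∧
      ∀ C : Fin n → ℝ, (∀ j, 0 ≤ C j) →
        M * Real.sqrt n ≤ Real.sqrt (∑ j, C j ^ 2) →
        (δ / Real.sqrt n) * (∑ j, C j ^ 2) ≤ ∑ j, Fj n x C j * C j) ∧
    (∀ K : ℝ, ∃ R : ℝ, ∀ C : Fin n → ℝ, (∀ j, 0 ≤ C j) →
      R ≤ Real.sqrt (∑ j, C j ^ 2) →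
      K ≤ (∑ j, Fj n x C j * C j) / Real.sqrt (∑ j, C j ^ 2)) := by
  obtain ⟨d, hd0, hd1, hkey⟩ := key_lemma n hn x hx
  have hn0 : (0:ℝ) < n := by exact_mod_cast hn
  set sn := Real.sqrt n with hsn
  have hsn0 : 0 < sn := Real.sqrt_pos.mpr hn0
  have hsnsq : sn * sn = n := Real.mul_self_sqrt (le_of_lt hn0)
  set δ := min (1/2 : ℝ) (d / (2 * sn)) with hδ
  have hδ0 : 0 < δ := lt_min (by norm_num) (div_pos hd0 (by positivity))
  have hδ1 : δ < 1 := lt_of_le_of_lt (min_le_left _ _) (by norm_num)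
  set M := 2 * d ^ 2 with hM
  have hM0 : 0 < M := by positivity
  haveI : Nonempty (Fin n) := ⟨⟨0, hn⟩⟩
  have main : ∀ C : Fin n → ℝ, (∀ j, 0 ≤ C j) →
      M * sn ≤ Real.sqrt (∑ j, C j ^ 2) →
      (δ / sn) * (∑ j, C j ^ 2) ≤ ∑ j, Fj n x C j * C j := by
    intro C hC hbig
    obtain ⟨jst, _, hmax⟩ := Finset.exists_max_image Finset.univ C Finset.univ_nonempty
    have hmax' : ∀ i, C i ≤ C jst := fun i => hmax i (Finset.mem_univ i)
    have hcs : (∑ j, C j ^ 2) ≤ n * C jst ^ 2 := by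
      calc ∑ j, C j ^ 2 ≤ ∑ _j : Fin n, C jst ^ 2 :=
            Finset.sum_le_sum (fun i _ => pow_le_pow_left₀ (hC i) (hmax' i) 2)
        _ = n * C jst ^ 2 := by simp [Finset.sum_const, nsmul_eq_mul]
    have hcst0 : 0 ≤ C jst := hC jst
    have hsqrt : Real.sqrt (∑ j, C j ^ 2) ≤ sn * C jst := by
      calc Real.sqrt (∑ j, C j ^ 2) ≤ Real.sqrt (n * C jst ^ 2) := Real.sqrt_le_sqrt hcs
        _ = sn * C jst := by
            rw [Real.sqrt_mul (le_of_lt hn0), Real.sqrt_sq hcst0]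
    have hMc : M ≤ C jst := by
      have h1 : M * sn ≤ sn * C jst := le_trans hbig hsqrt
      nlinarith
    have hkey' := hkey C hC jst hmax' (by rw [hM] at hMc; linarith)
    have hsum : Fj n x C jst * C jst ≤ ∑ j, Fj n x C j * C j :=
      Finset.single_le_sum (f := fun j => Fj n x C j * C j)
        (fun i _ => mul_nonneg (Fj_nonneg n hn x C i) (hC i)) (Finset.mem_univ jst)
    have h2 : (δ / sn) * (∑ j, C j ^ 2) ≤ (δ / sn) * (n * C jst ^ 2) :=
      mul_le_mul_of_nonneg_left hcs (by positivity)
    have hδd : δ * sn ≤ d / 2 := by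
      have h0 : δ ≤ d / (2 * sn) := min_le_right _ _
      calc δ * sn ≤ (d / (2 * sn)) * sn := by nlinarith
        _ = d / 2 := by field_simp
    have h3 : (δ / sn) * (n * C jst ^ 2) = (δ * sn) * C jst ^ 2 := by
      rw [← hsnsq]; field_simp
    have h4 : (δ * sn) * C jst ^ 2 ≤ (d / 2) * C jst ^ 2 := by nlinarith [sq_nonneg (C jst)]
    have h6 : (d * C jst / 2) * C jst ≤ Fj n x C jst * C jst :=
      mul_le_mul_of_nonneg_right hkey' hcst0
    nlinarith
  refine ⟨⟨δ, ⟨hδ0, hδ1⟩, M, hM0, main⟩, ?_⟩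
  intro K
  refine ⟨max (max (M * sn) 1) (K * sn / δ), ?_⟩
  intro C hC hR
  set S := Real.sqrt (∑ j, C j ^ 2) with hS
  have hS1 : 1 ≤ S := le_trans (le_trans (le_max_right _ _) (le_max_left _ _)) hR
  have hS0 : 0 < S := lt_of_lt_of_le one_pos hS1
  have hS2 : (∑ j, C j ^ 2) = S * S := by
    rw [hS, Real.mul_self_sqrt (Finset.sum_nonneg (fun i _ => sq_nonneg (C i)))]
  have hMain := main C hC (le_trans (le_trans (le_max_left _ _) (le_max_left _ _)) hR)
  have hRK : K * sn / δ ≤ S := le_trans (le_max_right _ _) hR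
  rw [le_div_iff₀ hS0]
  have hKs : K * sn ≤ S * δ := by
    rw [div_le_iff₀ hδ0] at hRK; linarith
  have h7 : (δ / sn) * (∑ j, C j ^ 2) = δ * S * S / sn := by
    rw [hS2]; ring
  have h8 : K * S ≤ δ * S * S / sn := by
    rw [le_div_iff₀ hsn0]
    nlinarith
  linarith [hMain, h7 ▸ hMain]
end
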